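/- Let μ be an infinite cardinal and let G₀ be a simple graph with vertex set of cardinality μ that contains no clique of cardinality ℵ₁. Then there exists a simple graph G with vertex set of cardinality μ such that: (1) G contains no clique of cardinality ℵ₁; (2) G has the extension property (is a random graph): for any two disjoint finite sets X, Y of vertices of G there is a vertex v ∉ X ∪ Y adjacent to every vertex of X and to no vertex of Y; and (3) G₀ embeds into G as an induced subgraph, i.e. there is an injective map f from the vertices of G₀ to the vertices of G such that x and y are adjacent in G₀ if and only if f(x) and f(y) are adjacent in G. -/

import Mathlib

open Cardinal

inductive Vt (V₀ : Type) : Type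
  | base : V₀ → Vt V₀
  | ext : List (Vt V₀) → List (Vt V₀) → Vt V₀

namespace Vt

variable {V₀ : Type}

def β (V₀ : Type) : V₀ ⊕ (ℕ × ℕ) → Type
  | .inl _ => Empty
  | .inr (m, n) => Fin (m + n)

instance : ∀ a, Finite (β V₀ a) := by
  rintro (v | ⟨m, n⟩) <;> dsimp [β] <;> infer_instance

def toW : Vt V₀ → WType (β V₀)
  | .base v => ⟨.inl v, Empty.elim⟩
  | .ext X Y => ⟨.inr (X.length, Y.length),
      fun i => toW ((X ++ Y).get (Fin.cast (by simp) i))⟩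
  termination_by t => sizeOf t
  decreasing_by
    have hm : (X ++ Y).get (Fin.cast (by simp) i) ∈ X ++ Y := by simpa using List.get_mem _ _ (Fin.cast (by simp) i).isLt
    rcases List.mem_append.1 hm with h | h
    · have := List.sizeOf_lt_of_mem h
      simp only [Vt.ext.sizeOf_spec]; omega
    · have := List.sizeOf_lt_of_mem h
      simp only [Vt.ext.sizeOf_spec]; omega

lemma toW_inj_aux : ∀ (n : ℕ) (s t : Vt V₀), sizeOf s ≤ n → toW s = toW t → s = t := by
  intro n
  induction n with
  | zero =>
    intro s t hs
    cases s <;> simp_all <;> omega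
  | succ n ih =>
    intro s t hs h
    cases s with
    | base a =>
      cases t with
      | base b =>
        rw [toW, toW] at h
        injection h with h1 h2
        injection h1 with h1
        rw [h1]
      | ext X Y =>
        rw [toW, toW] at h
        injection h with h1 h2
        exact absurd h1 (by simp)
    | ext X Y =>
      cases t with
      | base b =>
        rw [toW, toW] at h
        injection h with h1 h2
        exact absurd h1 (by simp)
      | ext X' Y' =>
        rw [toW, toW] at h
        injection h with h1 h2
        injection h1 with h1
        injection h1 with hX hY
        have hlen : X.length + Y.length = X'.length + Y'.length := by omega
        have hchild : ∀ i : Fin (X.length + Y.length),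
            toW ((X ++ Y).get (Fin.cast (by simp) i)) =
            toW ((X' ++ Y').get (Fin.cast (by simp) (Fin.cast hlen i))) := by
          dsimp only [β] at h2
          rw [Fin.heq_fun_iff hlen] at h2
          intro i; exact h2 i
        have hXY : X ++ Y = X' ++ Y' := by
          apply List.ext_get (by simp; omega)
          intro i hi1 hi2
          apply ih
          · have hm : (X ++ Y).get ⟨i, hi1⟩ ∈ X ++ Y := List.get_mem _ _
            rcases List.mem_append.1 hm with hmem | hmem <;>
              · have := List.sizeOf_lt_of_mem hmem
                simp only [Vt.ext.sizeOf_spec] at hs ⊢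
                omega
          · have := hchild ⟨i, by simpa using hi1⟩
            simpa [Fin.cast, List.get_eq_getElem] using this
        obtain ⟨rfl, rfl⟩ := List.append_inj hXY hX
        rfl



lemma toW_injective : Function.Injective (toW (V₀ := V₀)) :=
  fun s t h => toW_inj_aux (sizeOf s) s t le_rfl h

lemma base_injective : Function.Injective (Vt.base (V₀ := V₀)) := by
  intro a b h; injection h

lemma card_Vt (μ : Cardinal) (hμ : ℵ₀ ≤ μ) (hcard : #V₀ = μ) : #(Vt V₀) = μ := by
  apply le_antisymm
  · calc #(Vt V₀) ≤ #(WType (β V₀)) := Cardinal.mk_le_of_injective toW_injective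
      _ ≤ max #(V₀ ⊕ (ℕ × ℕ)) ℵ₀ := WType.cardinalMk_le_max_aleph0_of_finite
      _ = max (μ + ℵ₀) ℵ₀ := by rw [Cardinal.mk_sum]; simp [hcard]
      _ = μ := by rw [Cardinal.add_eq_left hμ hμ, max_eq_left hμ]
  · rw [← hcard]
    exact Cardinal.mk_le_of_injective base_injective

lemma sizeOf_lt_left {a : Vt V₀} {X Y : List (Vt V₀)} (h : a ∈ X) :
    sizeOf a < sizeOf (Vt.ext X Y) := by
  have := List.sizeOf_lt_of_mem h
  simp only [Vt.ext.sizeOf_spec]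
  omega

lemma sizeOf_lt_right {a : Vt V₀} {X Y : List (Vt V₀)} (h : a ∈ Y) :
    sizeOf a < sizeOf (Vt.ext X Y) := by
  have := List.sizeOf_lt_of_mem h
  simp only [Vt.ext.sizeOf_spec]
  omega

def VAdj (G₀ : SimpleGraph V₀) : Vt V₀ → Vt V₀ → Prop :=
  fun u v =>
    (∃ a b, u = .base a ∧ v = .base b ∧ G₀.Adj a b) ∨
    (∃ X Y, v = .ext X Y ∧ u ∈ X) ∨
    (∃ X Y, u = .ext X Y ∧ v ∈ X)

def VG (G₀ : SimpleGraph V₀) : SimpleGraph (Vt V₀) where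
  Adj := VAdj G₀
  symm := by
    refine ⟨?_⟩
    rintro u v (⟨a, b, rfl, rfl, h⟩ | ⟨X, Y, rfl, h⟩ | ⟨X, Y, rfl, h⟩)
    · exact Or.inl ⟨b, a, rfl, rfl, h.symm⟩
    · exact Or.inr (Or.inr ⟨X, Y, rfl, h⟩)
    · exact Or.inr (Or.inl ⟨X, Y, rfl, h⟩)
  loopless := by
    refine ⟨?_⟩
    rintro v (⟨a, b, rfl, hb, h⟩ | ⟨X, Y, rfl, h⟩ | ⟨X, Y, rfl, h⟩)
    · cases hb; exact G₀.irrefl h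
    · exact absurd (sizeOf_lt_left h) (lt_irrefl _)
    · exact absurd (sizeOf_lt_left h) (lt_irrefl _)

end Vt

theorem stmt_2 (μ : Cardinal) (hμ : ℵ₀ ≤ μ) (V₀ : Type) (G₀ : SimpleGraph V₀)
    (hcard : #V₀ = μ)
    (hnoclique : ¬ ∃ S : Set V₀, S.Pairwise G₀.Adj ∧ #S = aleph 1) :
    ∃ (V : Type) (G : SimpleGraph V), #V = μ ∧
      (¬ ∃ S : Set V, S.Pairwise G.Adj ∧ #S = aleph 1) ∧
      (∀ X Y : Finset V, Disjoint X Y →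
        ∃ v : V, v ∉ X ∧ v ∉ Y ∧ (∀ x ∈ X, G.Adj v x) ∧ (∀ y ∈ Y, ¬ G.Adj v y)) ∧
      (∃ f : V₀ → V, Function.Injective f ∧
        ∀ x y : V₀, G₀.Adj x y ↔ G.Adj (f x) (f y)) := by
  refine ⟨Vt V₀, Vt.VG G₀, Vt.card_Vt μ hμ hcard, ?_, ?_, ?_⟩
  · -- no clique of size ℵ₁
    rintro ⟨S, hpair, hS⟩
    set T : Set V₀ := {v | Vt.base v ∈ S} with hT
    have hTcount : #T ≤ ℵ₀ := by
      by_contra hlt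
      have h1 : aleph 1 ≤ #T := by
        rw [← Cardinal.succ_aleph0]
        exact Order.succ_le_of_lt (lt_of_not_ge hlt)
      obtain ⟨p, hps, hp⟩ := Cardinal.le_mk_iff_exists_subset.1 h1
      refine hnoclique ⟨p, ?_, hp⟩
      refine Set.Pairwise.mono hps ?_
      intro v hv w hw hvw
      have hadj := hpair hv hw (fun h => hvw (Vt.base_injective h))
      rcases hadj with ⟨a, b, ha, hb, h⟩ | ⟨X, Y, h, _⟩ | ⟨X, Y, h, _⟩
      · injection ha with ha; injection hb with hb; rwa [← ha, ← hb] at h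
      · exact absurd h (by simp)
      · exact absurd h (by simp)
    have hsplit : S = (Vt.base '' T) ∪ (S \ Set.range Vt.base) := by
      ext x
      constructor
      · intro hx
        by_cases hr : x ∈ Set.range Vt.base
        · obtain ⟨v, rfl⟩ := hr
          exact Or.inl ⟨v, hx, rfl⟩
        · exact Or.inr ⟨hx, hr⟩
      · rintro (⟨v, hv, rfl⟩ | ⟨hx, _⟩)
        · exact hv
        · exact hx
    have hS1 : #(S \ Set.range Vt.base : Set (Vt V₀)) ≤ ℵ₀ := by
      have hinj : Function.Injective
          (fun x : (S \ Set.range Vt.base : Set (Vt V₀)) => sizeOf x.val) := by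
        rintro ⟨s, hsS, hsr⟩ ⟨t, htS, htr⟩ h
        simp only at h
        ext
        by_contra hne
        have hadj := hpair hsS htS hne
        rcases hadj with ⟨a, b, ha, _, _⟩ | ⟨X, Y, rfl, hm⟩ | ⟨X, Y, rfl, hm⟩
        · exact hsr ⟨a, ha.symm⟩
        · exact absurd h (ne_of_lt (Vt.sizeOf_lt_left hm))
        · exact absurd h (ne_of_gt (Vt.sizeOf_lt_left hm))
      calc #(S \ Set.range Vt.base : Set (Vt V₀)) ≤ #ℕ := Cardinal.mk_le_of_injective hinj
        _ = ℵ₀ := Cardinal.mk_nat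
    have : #S ≤ ℵ₀ := by
      calc #S = #((Vt.base '' T) ∪ (S \ Set.range Vt.base) : Set (Vt V₀)) := by rw [← hsplit]
        _ ≤ #(Vt.base '' T : Set (Vt V₀)) + #(S \ Set.range Vt.base : Set (Vt V₀)) :=
            Cardinal.mk_union_le _ _
        _ ≤ ℵ₀ + ℵ₀ := by
            refine add_le_add ?_ hS1
            rw [Cardinal.mk_image_eq Vt.base_injective]
            exact hTcount
        _ = ℵ₀ := by simp
    rw [hS] at this
    exact absurd this (not_le.2 Cardinal.aleph0_lt_aleph_one)
  · -- extension property
    intro X Y hdisj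
    refine ⟨Vt.ext X.toList Y.toList, ?_, ?_, ?_, ?_⟩
    · intro h
      exact absurd (Vt.sizeOf_lt_left (Finset.mem_toList.2 h)) (lt_irrefl _)
    · intro h
      exact absurd (Vt.sizeOf_lt_right (Finset.mem_toList.2 h)) (lt_irrefl _)
    · intro x hx
      exact Or.inr (Or.inr ⟨X.toList, Y.toList, rfl, Finset.mem_toList.2 hx⟩)
    · intro y hy hadj
      rcases hadj with ⟨a, b, ha, _, _⟩ | ⟨X', Y', hy', hm⟩ | ⟨X', Y', he, hm⟩
      · exact absurd ha (by simp)
      · have h1 : sizeOf (Vt.ext X.toList Y.toList : Vt V₀) < sizeOf y := by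
          rw [hy']; exact Vt.sizeOf_lt_left hm
        have h2 : sizeOf y < sizeOf (Vt.ext X.toList Y.toList : Vt V₀) :=
          Vt.sizeOf_lt_right (Finset.mem_toList.2 hy)
        omega
      · injection he with he1 he2
        rw [← he1] at hm
        exact (Finset.disjoint_left.1 hdisj (Finset.mem_toList.1 hm)) hy
  · -- induced embedding
    refine ⟨Vt.base, Vt.base_injective, ?_⟩
    intro x y
    constructor
    · intro h
      exact Or.inl ⟨x, y, rfl, rfl, h⟩
    · rintro (⟨a, b, ha, hb, h⟩ | ⟨X, Y, h, _⟩ | ⟨X, Y, h, _⟩)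
      · injection ha with ha; injection hb with hb; rwa [← ha, ← hb] at h
      · exact absurd h (by simp)
      · exact absurd h (by simp)
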